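/- arXiv:2211.08563 — 6 statements merged into one kernel-verified Lean document; each statement's English description precedes it below -/
import Mathlib

section
/- For any non-negative real-valued random variable X with finite expectation, there exists t ∈ [0, E[X]+1] such that e^t / Pr(X < t) ≤ e^{E[X]+1} (in particular Pr(X < t) > 0 for this t). -/
open MeasureTheory ProbabilityTheory Real

theorem exists_good_threshold {Ω : Type*} [MeasurableSpace Ω]
    (μ : Measure Ω) [IsProbabilityMeasure μ]
    (X : Ω → ℝ) (hXm : Measurable X) (hXint : Integrable X μ)
    (hX0 : ∀ ω, 0 ≤ X ω) :
    ∃ t ∈ Set.Icc (0 : ℝ) ((∫ ω, X ω ∂μ) + 1),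
      0 < (μ {ω | X ω < t}).toReal ∧
      Real.exp t / (μ {ω | X ω < t}).toReal ≤ Real.exp ((∫ ω, X ω ∂μ) + 1) := by
  set I := ∫ ω, X ω ∂μ with hIdef
  have hI0 : 0 ≤ I := integral_nonneg hX0
  by_contra hcon
  push_neg at hcon
  set c := I + 1 with hcdef
  have hc0 : 0 < c := by positivity
  have hP : ∀ t ∈ Set.Icc (0:ℝ) c, (μ {ω | X ω < t}).toReal ≤ Real.exp (t - c) := by
    intro t ht
    rcases eq_or_lt_of_le (ENNReal.toReal_nonneg : 0 ≤ (μ {ω | X ω < t}).toReal) with h0 | h0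
    · rw [← h0]; positivity
    · have h1 := hcon t ht h0
      rw [lt_div_iff₀ h0] at h1
      have h2 : (μ {ω | X ω < t}).toReal < Real.exp t / Real.exp c := by
        rw [lt_div_iff₀ (exp_pos c)]; linarith
      rw [← Real.exp_sub] at h2
      exact h2.le
  have hsurv : ∀ t ∈ Set.Ico (0:ℝ) c,
      ENNReal.ofReal (1 - Real.exp (t - c)) ≤ μ {ω | t < X ω} := by
    intro t ht
    have hle : (μ {ω | X ω ≤ t}).toReal ≤ Real.exp (t - c) := by
      have htend : Filter.Tendsto (fun s => Real.exp (s - c)) (nhdsWithin t (Set.Ioi t))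
          (nhds (Real.exp (t - c))) := by
        apply Filter.Tendsto.mono_left _ nhdsWithin_le_nhds
        exact ((Real.continuous_exp.comp (continuous_id.sub continuous_const)).tendsto t)
      refine ge_of_tendsto htend ?_
      filter_upwards [Ioo_mem_nhdsGT ht.2] with s hs
      have hmono : μ {ω | X ω ≤ t} ≤ μ {ω | X ω < s} :=
        measure_mono (fun ω hω => lt_of_le_of_lt hω hs.1)
      calc (μ {ω | X ω ≤ t}).toReal ≤ (μ {ω | X ω < s}).toReal :=
            ENNReal.toReal_mono (measure_ne_top μ _) hmono
        _ ≤ Real.exp (s - c) := hP s ⟨(ht.1.trans hs.1.le), hs.2.le⟩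
    have h1 : μ {ω | X ω ≤ t} ≤ ENNReal.ofReal (Real.exp (t - c)) :=
      (ENNReal.le_ofReal_iff_toReal_le (measure_ne_top μ _) (exp_pos _).le).mpr hle
    have hcompl : {ω | t < X ω} = {ω | X ω ≤ t}ᶜ := by ext ω; simp [not_le]
    rw [hcompl, measure_compl (measurableSet_le hXm measurable_const) (measure_ne_top μ _), measure_univ]
    calc ENNReal.ofReal (1 - Real.exp (t - c))
        = 1 - ENNReal.ofReal (Real.exp (t - c)) := by
          rw [ENNReal.ofReal_sub _ (exp_pos _).le, ENNReal.ofReal_one]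
      _ ≤ 1 - μ {ω | X ω ≤ t} := tsub_le_tsub_left h1 1
  have hlayer : ENNReal.ofReal I = ∫⁻ t in Set.Ioi (0:ℝ), μ {ω | t < X ω} := by
    rw [← lintegral_eq_lintegral_meas_lt μ (Filter.Eventually.of_forall hX0) hXm.aemeasurable,
      ← ofReal_integral_eq_lintegral_ofReal hXint (Filter.Eventually.of_forall hX0)]
  have hcont : Continuous (fun t : ℝ => 1 - Real.exp (t - c)) :=
    continuous_const.sub (Real.continuous_exp.comp (continuous_id.sub continuous_const))
  have hint : IntegrableOn (fun t => 1 - Real.exp (t - c)) (Set.Ioo 0 c) := by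
    rw [← integrableOn_Icc_iff_integrableOn_Ioo]
    exact hcont.integrableOn_Icc
  have hnn : ∀ t ∈ Set.Ioo (0:ℝ) c, 0 ≤ 1 - Real.exp (t - c) := by
    intro t ht
    have : Real.exp (t - c) ≤ 1 := by
      rw [Real.exp_le_one_iff]; linarith [ht.2]
    linarith
  have hval : ∫ t in Set.Ioo (0:ℝ) c, (1 - Real.exp (t - c)) = I + Real.exp (-c) := by
    rw [← MeasureTheory.integral_Ioc_eq_integral_Ioo, ← intervalIntegral.integral_of_le hc0.le]
    rw [intervalIntegral.integral_sub intervalIntegrable_const]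
    · rw [intervalIntegral.integral_const]
      rw [intervalIntegral.integral_comp_sub_right (fun x => Real.exp x) c]
      rw [integral_exp]
      simp [hcdef]
      ring
    · apply Continuous.intervalIntegrable
      exact Real.continuous_exp.comp (continuous_id.sub continuous_const)
  have hlower : ENNReal.ofReal (I + Real.exp (-c)) ≤ ENNReal.ofReal I := by
    rw [hlayer]
    calc ENNReal.ofReal (I + Real.exp (-c))
        = ∫⁻ t in Set.Ioo (0:ℝ) c, ENNReal.ofReal (1 - Real.exp (t - c)) := by
          rw [← hval, ofReal_integral_eq_lintegral_ofReal hint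
            ((ae_restrict_iff' measurableSet_Ioo).mpr (Filter.Eventually.of_forall hnn))]
      _ ≤ ∫⁻ t in Set.Ioo (0:ℝ) c, μ {ω | t < X ω} :=
          setLIntegral_mono' measurableSet_Ioo (fun t ht => hsurv t ⟨ht.1.le, ht.2⟩)
      _ ≤ ∫⁻ t in Set.Ioi (0:ℝ), μ {ω | t < X ω} :=
          lintegral_mono_set (fun t ht => ht.1)
  rw [ENNReal.ofReal_le_ofReal_iff hI0] at hlower
  linarith [Real.exp_pos (-c)]
end

section
/- Let E > 0 and let X have density f(x) = e^{x-(E+1)} on [0, E+1+ln(1+e^{-(E+1)})]. Then for every t ≥ 0 with Pr(X < t) > 0, e^t / Pr(X < t) > e^{E+1}. -/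
open MeasureTheory Real

theorem density_example_no_good_threshold (E : ℝ) (hE : 0 < E)
    (μ : Measure ℝ)
    (hμ : μ = (volume.restrict
        (Set.Icc (0 : ℝ) (E + 1 + Real.log (1 + Real.exp (-(E + 1)))))).withDensity
        (fun x => ENNReal.ofReal (Real.exp (x - (E + 1))))) :
    ∀ t : ℝ, 0 ≤ t → 0 < (μ (Set.Iio t)).toReal →
      Real.exp t / (μ (Set.Iio t)).toReal > Real.exp (E + 1) := by
  intro t ht hP
  set L := E + 1 + Real.log (1 + Real.exp (-(E + 1))) with hL
  -- compute an upper bound for μ (Iio t)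
  have hsub : Set.Iio t ∩ Set.Icc (0 : ℝ) L ⊆ Set.Icc 0 t := by
    rintro x ⟨hx1, hx2, _⟩
    exact ⟨hx2, le_of_lt hx1⟩
  have hcont : Continuous fun x : ℝ => Real.exp (x - (E + 1)) := by
    continuity
  have hInt : IntegrableOn (fun x : ℝ => Real.exp (x - (E + 1))) (Set.Icc 0 t) volume :=
    hcont.integrableOn_Icc
  have hval : ∫ x in Set.Icc (0 : ℝ) t, Real.exp (x - (E + 1))
      = Real.exp (t - (E + 1)) - Real.exp (-(E + 1)) := by
    rw [MeasureTheory.integral_Icc_eq_integral_Ioc,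
      ← intervalIntegral.integral_of_le ht]
    have : ∀ x : ℝ, Real.exp (x - (E + 1)) = Real.exp x * Real.exp (-(E + 1)) := by
      intro x; rw [← Real.exp_add]; ring_nf
    simp only [this]
    rw [intervalIntegral.integral_mul_const, integral_exp, Real.exp_zero,
      sub_mul, one_mul, ← Real.exp_add,
      show t + -(E + 1) = t - (E + 1) by ring]
  have hkey : (μ (Set.Iio t)).toReal < Real.exp (t - (E + 1)) := by
    have h1 : μ (Set.Iio t)
        = ∫⁻ x in Set.Iio t ∩ Set.Icc (0 : ℝ) L,
            ENNReal.ofReal (Real.exp (x - (E + 1))) ∂volume := by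
      rw [hμ, withDensity_apply _ measurableSet_Iio,
        Measure.restrict_restrict measurableSet_Iio]
    have h2 : μ (Set.Iio t)
        ≤ ∫⁻ x in Set.Icc (0 : ℝ) t, ENNReal.ofReal (Real.exp (x - (E + 1))) ∂volume := by
      rw [h1]
      exact lintegral_mono_set hsub
    have h3 : ∫⁻ x in Set.Icc (0 : ℝ) t, ENNReal.ofReal (Real.exp (x - (E + 1))) ∂volume
        = ENNReal.ofReal (Real.exp (t - (E + 1)) - Real.exp (-(E + 1))) := by
      rw [← hval]
      exact (ofReal_integral_eq_lintegral_ofReal hInt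
        (Filter.Eventually.of_forall fun x => (Real.exp_pos _).le)).symm
    have h4 : μ (Set.Iio t) ≤ ENNReal.ofReal (Real.exp (t - (E + 1)) - Real.exp (-(E + 1))) :=
      h3 ▸ h2
    have h5 : (μ (Set.Iio t)).toReal
        ≤ Real.exp (t - (E + 1)) - Real.exp (-(E + 1)) := by
      calc (μ (Set.Iio t)).toReal
          ≤ (ENNReal.ofReal (Real.exp (t - (E + 1)) - Real.exp (-(E + 1)))).toReal :=
            ENNReal.toReal_mono ENNReal.ofReal_ne_top h4
        _ = Real.exp (t - (E + 1)) - Real.exp (-(E + 1)) := ENNReal.toReal_ofReal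
            (by have : Real.exp (-(E + 1)) ≤ Real.exp (t - (E + 1)) :=
                  Real.exp_le_exp.mpr (by linarith)
                linarith)
    have := Real.exp_pos (-(E + 1))
    linarith
  rw [gt_iff_lt, lt_div_iff₀ hP]
  have h6 : Real.exp (E + 1) * (μ (Set.Iio t)).toReal
      < Real.exp (E + 1) * Real.exp (t - (E + 1)) :=
    mul_lt_mul_of_pos_left hkey (Real.exp_pos _)
  rw [← Real.exp_add] at h6
  calc Real.exp (E + 1) * (μ (Set.Iio t)).toReal
      < Real.exp (E + 1 + (t - (E + 1))) := h6
    _ = Real.exp t := by ring_nf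
end

section
/- Let X be a non-negative random variable with E[X] ≥ 1 (ensuring ln E[X] ≥ 0). Then either Pr(X ≤ E[X] - ln E[X]) > 1/(E[X]+1), or Pr(X ≤ E[X] + 2) > 1/(ln E[X] + 2). -/
open MeasureTheory ProbabilityTheory Real

theorem two_thresholds {Ω : Type*} [MeasurableSpace Ω]
    (μ : Measure Ω) [IsProbabilityMeasure μ]
    (X : Ω → ℝ) (hXm : Measurable X) (hXint : Integrable X μ)
    (hX0 : ∀ ω, 0 ≤ X ω) (hmean : 1 ≤ ∫ ω, X ω ∂μ) :
    (μ {ω | X ω ≤ (∫ ω, X ω ∂μ) - Real.log (∫ ω, X ω ∂μ)}).toReal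
        > 1 / ((∫ ω, X ω ∂μ) + 1) ∨
    (μ {ω | X ω ≤ (∫ ω, X ω ∂μ) + 2}).toReal
        > 1 / (Real.log (∫ ω, X ω ∂μ) + 2) := by
  set m := ∫ ω, X ω ∂μ with hm
  set L := Real.log m with hLdef
  set a := m - L with hadef
  have hm1 : (1:ℝ) ≤ m := hmean
  have hL0 : 0 ≤ L := Real.log_nonneg hm1
  have hLm : L ≤ m - 1 := Real.log_le_sub_one_of_pos (by linarith)
  have ha1 : (1:ℝ) ≤ a := by simp only [hadef]; linarith
  by_cases h1 : (μ {ω | X ω ≤ a}).toReal > 1 / (m + 1)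
  · exact Or.inl h1
  right
  push_neg at h1
  -- sets
  set s : Set Ω := {ω | a < X ω} with hsdef
  set u : Set Ω := {ω | m + 2 < X ω} with hudef
  have hsm : MeasurableSet s := measurableSet_lt measurable_const hXm
  have hum : MeasurableSet u := measurableSet_lt measurable_const hXm
  have hus : u ⊆ s := fun ω hω => by
    simp only [hudef, Set.mem_setOf_eq] at hω
    simp only [hsdef, Set.mem_setOf_eq]
    linarith
  set t := (μ {ω | X ω ≤ a}).toReal with htdef
  set p := (μ s).toReal with hpdef
  set q := (μ u).toReal with hqdef
  have ht0 : 0 ≤ t := ENNReal.toReal_nonneg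
  -- p = 1 - t
  have hscompl : s = {ω | X ω ≤ a}ᶜ := by
    ext ω; simp [hsdef, not_le]
  have hp : p = 1 - t := by
    rw [hpdef, hscompl, prob_compl_eq_one_sub (measurableSet_le hXm measurable_const),
      ENNReal.toReal_sub_of_le prob_le_one (by simp)]
    simp [htdef]
  -- integrability
  have hXa_int : Integrable (fun ω => X ω - a) μ := hXint.sub (integrable_const a)
  have hXa_ints : IntegrableOn (fun ω => X ω - a) s μ := hXa_int.integrableOn
  -- I ≤ m - a * p
  have hI1 : ∫ ω in s, (X ω - a) ∂μ ≤ m - a * p := by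
    rw [integral_sub hXint.integrableOn (integrableOn_const (measure_ne_top μ s))]
    rw [setIntegral_const]
    have : ∫ ω in s, X ω ∂μ ≤ m := by
      rw [hm]
      exact setIntegral_le_integral hXint (Filter.Eventually.of_forall hX0)
    simp only [smul_eq_mul] at *
    linarith [this, (show μ.real s * a = a * p from mul_comm _ _)]
  -- (L+2) * q ≤ I
  have hI2 : (L + 2) * q ≤ ∫ ω in s, (X ω - a) ∂μ := by
    have step1 : (L + 2) * q ≤ ∫ ω in u, (X ω - a) ∂μ := by
      apply setIntegral_ge_of_const_le_real hum (measure_ne_top μ u)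
      · intro x hx
        simp only [hudef, Set.mem_setOf_eq] at hx
        simp only [hadef]
        linarith
      · exact hXa_int.integrableOn
    have step2 : ∫ ω in u, (X ω - a) ∂μ ≤ ∫ ω in s, (X ω - a) ∂μ := by
      apply setIntegral_mono_set hXa_ints
      · refine (ae_restrict_iff' hsm).2 (Filter.Eventually.of_forall fun ω hω => ?_)
        simp only [hsdef, Set.mem_setOf_eq] at hω
        simp only [Pi.zero_apply]
        linarith
      · exact Filter.Eventually.of_forall hus
    linarith
  -- target prob = 1 - q
  have hucompl : {ω | X ω ≤ m + 2} = uᶜ := by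
    ext ω; simp [hudef, not_lt]
  have hgoalprob : (μ {ω | X ω ≤ m + 2}).toReal = 1 - q := by
    rw [hucompl, prob_compl_eq_one_sub hum,
      ENNReal.toReal_sub_of_le prob_le_one (by simp)]
    simp [hqdef]
  rw [hgoalprob]
  have hq0 : 0 ≤ q := ENNReal.toReal_nonneg
  have hkey : (L + 2) * q ≤ m - a * p := le_trans hI2 hI1
  have ht1 : (m + 1) * t ≤ 1 := by
    have := mul_le_mul_of_nonneg_left h1 (by linarith : (0:ℝ) ≤ m + 1)
    have h2 : (m + 1) * (1 / (m + 1)) = 1 := by field_simp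
    linarith [this, h2.le]
  have ha0 : (0:ℝ) ≤ a := by linarith
  have hkey2 : (L + 2) * q ≤ L + a * t := by
    have heq : m - a * p = L + a * t := by rw [hp, hadef]; ring
    linarith [hkey, heq.le, heq.ge]
  have hat : (m + 1) * (a * t) ≤ a := by
    nlinarith [mul_le_mul_of_nonneg_left ht1 ha0]
  -- final arithmetic: (L+2)*q < L+1  hence 1 - q > 1/(L+2)
  have hqlt : (L + 2) * q < L + 1 := by
    have hatlt : a * t < 1 := by nlinarith [hat, hadef.le, hadef.ge]
    linarith [hkey2, hatlt]
  rw [gt_iff_lt, div_lt_iff₀ (by linarith : (0:ℝ) < L + 2)]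
  nlinarith [hqlt]
end

section
/- Define λ(x) = 3 ln x and λ*(x) as the smallest k with λ^{(k)}(x) ≤ 5 (for x ≥ 5). Then for all x ≥ 5, the sum ∑_{i=0}^{λ*(x)} 1/λ^{(i)}(x) < 2. -/
open Real

noncomputable def lam (x : ℝ) : ℝ := 3 * Real.log x

noncomputable def lstar (x : ℝ) : ℕ := sInf {k : ℕ | lam^[k] x ≤ 5}

lemma log_five_ub : Real.log 5 ≤ 1.616 := by
  have h2 : Real.log 5 = Real.log 4 + Real.log (5/4) := by
    rw [← Real.log_mul (by norm_num) (by norm_num)]; norm_num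
  have h3 : Real.log (5/4) ≤ Real.log ((1.0574:ℝ)^4) :=
    Real.log_le_log (by norm_num) (by norm_num)
  have h4 : Real.log ((1.0574:ℝ)^4) = 4 * Real.log 1.0574 := by
    rw [Real.log_pow]; norm_num
  have h5 : Real.log (1.0574:ℝ) ≤ 0.0574 := by
    have := Real.log_le_sub_one_of_pos (x := (1.0574:ℝ)) (by norm_num); linarith
  have h6 : Real.log 4 = 2 * Real.log 2 := by
    rw [show (4:ℝ) = 2^2 by norm_num, Real.log_pow]; norm_num
  have := Real.log_two_lt_d9
  rw [h2, h6]
  rw [h4] at h3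
  linarith

lemma log_twenty_ub : Real.log 20 ≤ 3 := by
  rw [Real.log_le_iff_le_exp (by norm_num)]
  have h : rexp 3 = rexp 1 ^ 3 := by
    rw [Real.exp_one_pow]; norm_num
  have he := Real.exp_one_gt_d9
  rw [h]
  calc (20:ℝ) ≤ (2.7182818283:ℝ)^3 := by norm_num
    _ ≤ rexp 1 ^ 3 := pow_le_pow_left₀ (by norm_num) he.le 3

lemma log_ge_of_ge_sixteen {x : ℝ} (hx : 16 ≤ x) : 2.772 ≤ Real.log x := by
  have h1 : Real.log 16 ≤ Real.log x := Real.log_le_log (by norm_num) hx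
  have h2 : Real.log 16 = 4 * Real.log 2 := by
    rw [show (16:ℝ) = 2^4 by norm_num, Real.log_pow]; norm_num
  have := Real.log_two_gt_d9
  rw [h2] at h1
  linarith

lemma lam_ge_four {y : ℝ} (hy : 4 ≤ y) : 4 ≤ lam y := by
  have h1 : Real.log 4 ≤ Real.log y := Real.log_le_log (by norm_num) hy
  have h2 : Real.log 4 = 2 * Real.log 2 := by
    rw [show (4:ℝ) = 2^2 by norm_num, Real.log_pow]; norm_num
  have := Real.log_two_gt_d9
  unfold lam
  rw [h2] at h1
  linarith

lemma iter_ge_four (x : ℝ) (hx : 4 ≤ x) (i : ℕ) : 4 ≤ lam^[i] x := by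
  induction i with
  | zero => simpa using hx
  | succ n ih =>
    rw [Function.iterate_succ_apply']
    exact lam_ge_four ih

lemma sum_le_quarter (x : ℝ) (hx : 5 ≤ x) (n : ℕ) :
    ∑ i ∈ Finset.range n, 1 / lam^[i] x ≤ n / 4 := by
  calc ∑ i ∈ Finset.range n, 1 / lam^[i] x
      ≤ ∑ i ∈ Finset.range n, (1/4 : ℝ) := by
        apply Finset.sum_le_sum
        intro i _
        have h4 : 4 ≤ lam^[i] x := iter_ge_four x (by linarith) i
        rw [div_le_div_iff₀ (by linarith) (by norm_num)]
        linarith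
    _ = n / 4 := by
        rw [Finset.sum_const, Finset.card_range]
        ring

lemma lam_affine {y b : ℝ} (hy : 0 < y) (hyb : y ≤ b) : lam y ≤ 1.848 + 0.6 * b := by
  have hb : 0 < b := lt_of_lt_of_le hy hyb
  have h1 : Real.log y ≤ Real.log b := Real.log_le_log hy hyb
  have h2 : Real.log b = Real.log 5 + Real.log (b/5) := by
    have hbb : (5:ℝ) * (b/5) = b := by ring
    rw [← Real.log_mul (by norm_num) (by positivity), hbb]
  have h3 : Real.log (b/5) ≤ b/5 - 1 := Real.log_le_sub_one_of_pos (by positivity)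
  have h5 := log_five_ub
  unfold lam
  nlinarith

lemma lstar_le_six {x : ℝ} (hx : 5 ≤ x) (hx20 : x ≤ 20) : lstar x ≤ 6 := by
  have hpos : (0:ℝ) < x := by linarith
  have h4 : ∀ i, 4 ≤ lam^[i] x := iter_ge_four x (by linarith)
  have t1 : lam x ≤ 9 := by
    have := Real.log_le_log hpos hx20
    have := log_twenty_ub
    unfold lam; linarith
  have e1 : lam^[1] x = lam x := Function.iterate_one lam ▸ rfl
  have p : ∀ i, (0:ℝ) < lam^[i] x := fun i => by have := h4 i; linarith
  have t2 : lam^[2] x ≤ 7.248 := by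
    rw [show (2:ℕ) = 1 + 1 from rfl, Function.iterate_succ_apply', e1]
    have := lam_affine (y := lam x) (by have := p 1; rwa [e1] at this) t1
    linarith
  have t3 : lam^[3] x ≤ 6.1968 := by
    rw [show (3:ℕ) = 2 + 1 from rfl, Function.iterate_succ_apply']
    have := lam_affine (p 2) t2
    linarith
  have t4 : lam^[4] x ≤ 5.56608 := by
    rw [show (4:ℕ) = 3 + 1 from rfl, Function.iterate_succ_apply']
    have := lam_affine (p 3) t3
    linarith
  have t5 : lam^[5] x ≤ 5.187648 := by
    rw [show (5:ℕ) = 4 + 1 from rfl, Function.iterate_succ_apply']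
    have := lam_affine (p 4) t4
    linarith
  have t6 : lam^[6] x ≤ 5 := by
    rw [show (6:ℕ) = 5 + 1 from rfl, Function.iterate_succ_apply']
    have := lam_affine (p 5) t5
    linarith
  exact Nat.sInf_le t6

lemma lstar_succ_eq {x : ℝ} {m : ℕ} (h : lstar x = m + 1) : lstar (lam x) = m := by
  have hne : {k : ℕ | lam^[k] x ≤ 5}.Nonempty := by
    by_contra hcon
    rw [Set.not_nonempty_iff_eq_empty] at hcon
    unfold lstar at h
    rw [hcon, Nat.sInf_empty] at h
    exact Nat.succ_ne_zero m h.symm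
  have hmem : lam^[m+1] x ≤ 5 := by
    have := Nat.sInf_mem hne
    rwa [show sInf {k : ℕ | lam^[k] x ≤ 5} = m + 1 from h] at this
  have hmem' : lam^[m] (lam x) ≤ 5 := by
    rwa [← Function.iterate_succ_apply]
  have hle : lstar (lam x) ≤ m := Nat.sInf_le hmem'
  have hge : m ≤ lstar (lam x) := by
    by_contra hcon
    push_neg at hcon
    have hne' : {k : ℕ | lam^[k] (lam x) ≤ 5}.Nonempty := ⟨m, hmem'⟩
    have hmem2 : lam^[lstar (lam x)] (lam x) ≤ 5 := Nat.sInf_mem hne'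
    have hmem3 : lam^[lstar (lam x) + 1] x ≤ 5 := by
      rwa [Function.iterate_succ_apply]
    have := Nat.sInf_le (show lstar (lam x) + 1 ∈ {k : ℕ | lam^[k] x ≤ 5} from hmem3)
    unfold lstar at h
    omega
  omega

lemma main_induction (n : ℕ) : ∀ x : ℝ, 5 ≤ x → x ≤ 20 * 2^n →
    ∑ i ∈ Finset.range (lstar x + 1), 1 / lam^[i] x ≤ 7/4 + (1 - (1/2:ℝ)^n)/5 := by
  induction n with
  | zero =>
    intro x hx hx20
    simp only [pow_zero, mul_one] at hx20
    have h6 := lstar_le_six hx hx20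
    have := sum_le_quarter x hx (lstar x + 1)
    have : ∑ i ∈ Finset.range (lstar x + 1), 1 / lam^[i] x ≤ ((lstar x : ℝ) + 1) / 4 := by
      have := sum_le_quarter x hx (lstar x + 1)
      push_cast at this
      linarith
    have hc : ((lstar x : ℝ) + 1) ≤ 7 := by exact_mod_cast Nat.succ_le_succ h6
    have hz : (7:ℝ)/4 + (1 - (1/2:ℝ)^0)/5 = 7/4 := by norm_num
    rw [hz]
    linarith
  | succ n ih =>
    intro x hx hx20
    have hpow : (0:ℝ) < 2^n := by positivity
    have hbound : (7:ℝ)/4 + (1 - (1/2:ℝ)^n)/5 ≤ 7/4 + (1 - (1/2:ℝ)^(n+1))/5 := by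
      have : ((1/2:ℝ))^(n+1) ≤ (1/2)^n := by
        apply pow_le_pow_of_le_one <;> norm_num
      linarith
    rcases le_or_gt x (20 * 2^n) with hle | hgt
    · exact le_trans (ih x hx hle) hbound
    · have h2n : (1:ℝ) ≤ 2^n := one_le_pow₀ (by norm_num)
      have hx20' : (20:ℝ) ≤ x := by nlinarith
      rcases Nat.eq_zero_or_eq_succ_pred (lstar x) with h0 | hsucc
      · rw [h0]
        simp only [Nat.zero_add, Finset.sum_range_one, Function.iterate_zero_apply]
        have : 1/x ≤ 1/5 := by
          rw [div_le_div_iff₀ (by linarith) (by norm_num)]; linarith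
        have hp : ((1/2:ℝ))^(n+1) ≤ 1 := by
          apply pow_le_one₀ <;> norm_num
        linarith
      · set m := (lstar x).pred with hm
        have hls : lstar x = m + 1 := hsucc
        have hls' : lstar (lam x) = m := lstar_succ_eq hls
        have hlam5 : 5 ≤ lam x := by
          have := log_ge_of_ge_sixteen (x := x) (by linarith)
          unfold lam; linarith
        have hlamhalf : lam x ≤ x / 2 := by
          have h1 : Real.log x = Real.log 20 + Real.log (x/20) := by
            have hxx : (20:ℝ) * (x/20) = x := by ring
            rw [← Real.log_mul (by norm_num) (by positivity), hxx]
          have h2 : Real.log (x/20) ≤ x/20 - 1 := Real.log_le_sub_one_of_pos (by positivity)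
          have h3 := log_twenty_ub
          unfold lam; nlinarith
        have hlam20 : lam x ≤ 20 * 2^n := by
          have hps : (20:ℝ) * 2^(n+1) = 2 * (20 * 2^n) := by ring
          linarith
        have hsum := ih (lam x) hlam5 hlam20
        rw [hls'] at hsum
        have hpeel : ∑ i ∈ Finset.range (lstar x + 1), 1 / lam^[i] x
            = ∑ i ∈ Finset.range (m + 1), 1 / lam^[i] (lam x) + 1/x := by
          rw [hls, Finset.sum_range_succ' (fun i => 1 / lam^[i] x) (m+1)]
          simp only [Function.iterate_succ_apply, Function.iterate_zero_apply]
        have hxinv : 1/x ≤ (1/2:ℝ)^n / 20 := by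
          rw [div_le_div_iff₀ (by linarith) (by norm_num)]
          have : (1/2:ℝ)^n * (2:ℝ)^n = 1 := by
            rw [← mul_pow]; norm_num
          nlinarith
        rw [hpeel]
        have hp0 : (0:ℝ) ≤ (1/2:ℝ)^n := by positivity
        have : (7:ℝ)/4 + (1 - (1/2:ℝ)^n)/5 + (1/2:ℝ)^n/20 ≤ 7/4 + (1 - (1/2:ℝ)^(n+1))/5 := by
          rw [pow_succ]
          nlinarith
        linarith

theorem sum_inv_lam_iter_lt_two (x : ℝ) (hx : 5 ≤ x) :
    ∑ i ∈ Finset.range (lstar x + 1), 1 / lam^[i] x < 2 := by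
  obtain ⟨n, hn⟩ := pow_unbounded_of_one_lt (x / 20) (by norm_num : (1:ℝ) < 2)
  have hx20 : x ≤ 20 * 2^n := by
    have : x / 20 < 2^n := hn
    linarith
  have h := main_induction n x hx hx20
  have hp : (0:ℝ) ≤ (1/2:ℝ)^n := by positivity
  linarith
end

section
/- Let λ(x) = 3 ln x and λ* as in the paper. For all E ≥ 5: ∑_{k=1}^{λ*(E)} (λ^{(k-1)}(E))² · e^{-λ^{(k)}(E)} = ∑_{k=1}^{λ*(E)} (λ^{(k-1)}(E))^{-1} < 2. -/
open Real

lemma log_five_lt : Real.log 5 < 13/8 := by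
  have h1 : (5:ℝ)^8 < Real.exp 13 := by
    have h2 : (2.7182818283:ℝ)^13 ≤ (Real.exp 1)^13 :=
      pow_le_pow_left₀ (by norm_num) Real.exp_one_gt_d9.le 13
    have h3 : (Real.exp 1)^13 = Real.exp 13 := by
      rw [← Real.exp_nat_mul]; norm_num
    calc (5:ℝ)^8 = 390625 := by norm_num
      _ < (2.7182818283:ℝ)^13 := by norm_num
      _ ≤ (Real.exp 1)^13 := h2
      _ = Real.exp 13 := h3
  have h4 : Real.log ((5:ℝ)^8) < 13 := by
    rw [Real.log_lt_iff_lt_exp (by positivity)]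
    exact h1
  rw [Real.log_pow] at h4
  push_cast at h4
  linarith

lemma lam_le_lin {x : ℝ} (hx : 0 < x) : lam x ≤ 3/5 * x + 15/8 := by
  have h1 : Real.log (x/5) ≤ x/5 - 1 := Real.log_le_sub_one_of_pos (by positivity)
  have h2 : Real.log (x/5) = Real.log x - Real.log 5 :=
    Real.log_div (ne_of_gt hx) (by norm_num)
  have h3 := log_five_lt
  unfold lam
  linarith

lemma lam_pos {x : ℝ} (hx : 5 < x) : 0 < lam x := by
  have : 0 < Real.log x := Real.log_pos (by linarith)
  unfold lam; linarith

lemma lam_half {x : ℝ} (hx : 21 ≤ x) : lam x ≤ x/2 := by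
  have h1 : Real.log (x/21) ≤ x/21 - 1 := Real.log_le_sub_one_of_pos (by positivity)
  have h2 : Real.log (x/21) = Real.log x - Real.log 21 :=
    Real.log_div (by linarith) (by norm_num)
  have h3 : Real.log 21 ≤ Real.log 25 := Real.log_le_log (by norm_num) (by norm_num)
  have h4 : Real.log 25 = 2 * Real.log 5 := by
    rw [show (25:ℝ) = 5^2 by norm_num, Real.log_pow]; push_cast; ring
  have h5 := log_five_lt
  unfold lam
  linarith

lemma chain8 {x : ℝ} (hx : 0 < x) (hx21 : x ≤ 21) : ∃ k ≤ 8, lam^[k] x ≤ 5 := by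
  by_cases h0 : x ≤ 5
  · exact ⟨0, by norm_num, by simpa⟩
  push_neg at h0
  have p1 : 0 < lam x := lam_pos h0
  have b1 : lam x ≤ 14.475 := (lam_le_lin hx).trans (by linarith)
  by_cases h1 : lam x ≤ 5
  · exact ⟨1, by norm_num, by simpa⟩
  push_neg at h1
  have p2 : 0 < lam (lam x) := lam_pos h1
  have b2 : lam (lam x) ≤ 10.56 := (lam_le_lin p1).trans (by linarith)
  by_cases h2 : lam (lam x) ≤ 5
  · exact ⟨2, by norm_num, by simpa [Function.iterate_succ_apply']⟩
  push_neg at h2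
  have p3 : 0 < lam (lam (lam x)) := lam_pos h2
  have b3 : lam (lam (lam x)) ≤ 8.211 := (lam_le_lin p2).trans (by linarith)
  by_cases h3 : lam (lam (lam x)) ≤ 5
  · exact ⟨3, by norm_num, by simpa [Function.iterate_succ_apply']⟩
  push_neg at h3
  have p4 : 0 < lam (lam (lam (lam x))) := lam_pos h3
  have b4 : lam (lam (lam (lam x))) ≤ 6.8016 := (lam_le_lin p3).trans (by linarith)
  by_cases h4 : lam (lam (lam (lam x))) ≤ 5
  · exact ⟨4, by norm_num, by simpa [Function.iterate_succ_apply']⟩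
  push_neg at h4
  have p5 : 0 < lam (lam (lam (lam (lam x)))) := lam_pos h4
  have b5 : lam (lam (lam (lam (lam x)))) ≤ 5.956 := (lam_le_lin p4).trans (by linarith)
  by_cases h5 : lam (lam (lam (lam (lam x)))) ≤ 5
  · exact ⟨5, by norm_num, by simpa [Function.iterate_succ_apply']⟩
  push_neg at h5
  have p6 : 0 < lam (lam (lam (lam (lam (lam x))))) := lam_pos h5
  have b6 : lam (lam (lam (lam (lam (lam x))))) ≤ 5.4486 := (lam_le_lin p5).trans (by linarith)
  by_cases h6 : lam (lam (lam (lam (lam (lam x))))) ≤ 5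
  · exact ⟨6, by norm_num, by simpa [Function.iterate_succ_apply']⟩
  push_neg at h6
  have p7 : 0 < lam (lam (lam (lam (lam (lam (lam x)))))) := lam_pos h6
  have b7 : lam (lam (lam (lam (lam (lam (lam x)))))) ≤ 5.14416 := (lam_le_lin p6).trans (by linarith)
  by_cases h7 : lam (lam (lam (lam (lam (lam (lam x)))))) ≤ 5
  · exact ⟨7, by norm_num, by simpa [Function.iterate_succ_apply']⟩
  push_neg at h7
  have b8 : lam (lam (lam (lam (lam (lam (lam (lam x))))))) ≤ 4.961496 := by
    have := lam_le_lin p7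
    linarith
  exact ⟨8, le_refl 8, by simpa [Function.iterate_succ_apply'] using b8.trans (by norm_num)⟩

lemma halve : ∀ (j : ℕ) (x : ℝ), 0 < x → x ≤ 21 * 2^j → ∃ k, lam^[k] x ≤ 5 := by
  intro j
  induction j with
  | zero =>
    intro x hx h
    obtain ⟨k, _, hk⟩ := chain8 hx (by simpa using h)
    exact ⟨k, hk⟩
  | succ j ih =>
    intro x hx h
    by_cases h' : x ≤ 21 * 2^j
    · exact ih x hx h'
    push_neg at h'
    have h21 : (21:ℝ) ≤ x := by
      have : (21:ℝ) ≤ 21 * 2^j := by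
        have : (1:ℝ) ≤ 2^j := one_le_pow₀ (by norm_num)
        nlinarith
      linarith
    have hhalf : lam x ≤ x/2 := lam_half h21
    have hpos : 0 < lam x := lam_pos (by linarith)
    obtain ⟨k, hk⟩ := ih (lam x) hpos (by
      have : x ≤ 21 * 2^(j+1) := h
      have : x/2 ≤ 21 * 2^j := by
        rw [pow_succ] at this; linarith
      linarith)
    exact ⟨k+1, by rwa [Function.iterate_succ_apply]⟩

lemma lstar_nonempty {x : ℝ} (hx : 0 < x) : {k : ℕ | lam^[k] x ≤ 5}.Nonempty := by
  obtain ⟨N, hN⟩ := exists_nat_ge (x / 21)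
  have h2 : x ≤ 21 * 2^N := by
    have hN2 : (N:ℝ) ≤ 2^N := by
      exact_mod_cast (Nat.lt_two_pow_self (n := N)).le
    have : x / 21 ≤ (2:ℝ)^N := le_trans hN hN2
    nlinarith [this]
  obtain ⟨k, hk⟩ := halve N x hx h2
  exact ⟨k, hk⟩

lemma lstar_mem {x : ℝ} (hx : 0 < x) : lam^[lstar x] x ≤ 5 :=
  Nat.sInf_mem (lstar_nonempty hx)

lemma lt_of_lt_lstar {x : ℝ} {k : ℕ} (h : k < lstar x) : 5 < lam^[k] x := by
  have := Nat.notMem_of_lt_sInf h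
  simpa using not_le.mp this

lemma lstar_succ {x : ℝ} (hx : 5 < x) : lstar x = lstar (lam x) + 1 := by
  have hx0 : 0 < x := by linarith
  have hpos : 0 < lam x := lam_pos hx
  have h1 : lstar x ≤ lstar (lam x) + 1 := by
    apply Nat.sInf_le
    show lam^[lstar (lam x) + 1] x ≤ 5
    rw [Function.iterate_succ_apply]
    exact lstar_mem hpos
  have h0 : 0 < lstar x := by
    rcases Nat.eq_zero_or_pos (lstar x) with h | h
    · exfalso
      have := lstar_mem hx0
      rw [h] at this
      simp at this
      linarith
    · exact h
  have h2 : lstar (lam x) ≤ lstar x - 1 := by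
    apply Nat.sInf_le
    show lam^[lstar x - 1] (lam x) ≤ 5
    rw [← Function.iterate_succ_apply]
    have heq : lstar x - 1 + 1 = lstar x := by omega
    rw [Nat.succ_eq_add_one, heq]
    exact lstar_mem hx0
  omega

lemma sum_rec (g : ℝ → ℝ) {x : ℝ} (hx : 5 < x) :
    ∑ k ∈ Finset.range (lstar x), g (lam^[k] x)
      = g x + ∑ k ∈ Finset.range (lstar (lam x)), g (lam^[k] (lam x)) := by
  rw [lstar_succ hx, Finset.sum_range_succ']
  simp only [Function.iterate_succ_apply, Function.iterate_zero, id_eq]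
  ring

lemma small_bound {x : ℝ} (h5 : 5 ≤ x) (h21 : x ≤ 21) :
    ∑ k ∈ Finset.range (lstar x), (lam^[k] x)⁻¹ < 8/5 := by
  have hn : lstar x ≤ 8 := by
    obtain ⟨k, hk8, hk⟩ := chain8 (by linarith) h21
    exact le_trans (Nat.sInf_le hk) hk8
  rcases Nat.eq_zero_or_pos (lstar x) with h | h
  · simp [h]
  · have hlt : ∑ k ∈ Finset.range (lstar x), (lam^[k] x)⁻¹
        < ∑ _k ∈ Finset.range (lstar x), (1/5 : ℝ) := by
      apply Finset.sum_lt_sum_of_nonempty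
      · exact Finset.nonempty_range_iff.mpr h.ne'
      · intro i hi
        have h5i : 5 < lam^[i] x := lt_of_lt_lstar (Finset.mem_range.mp hi)
        rw [show (1/5:ℝ) = (5:ℝ)⁻¹ by norm_num]
        exact (inv_lt_inv₀ (by linarith) (by norm_num)).mpr h5i
    rw [Finset.sum_const, Finset.card_range] at hlt
    have hc : (lstar x : ℝ) ≤ 8 := by exact_mod_cast hn
    have : (lstar x : ℝ) * (1/5) ≤ 8/5 := by linarith
    calc ∑ k ∈ Finset.range (lstar x), (lam^[k] x)⁻¹
        < (lstar x : ℝ) * (1/5) := by simpa [nsmul_eq_mul] using hlt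
      _ ≤ 8/5 := this

lemma large_bound : ∀ (n : ℕ) (x : ℝ), 21 < x → lstar x = n →
    ∑ k ∈ Finset.range (lstar x), (lam^[k] x)⁻¹ ≤ 8/5 + 2/21 - 1/x := by
  intro n
  induction n with
  | zero =>
    intro x hx h
    exfalso
    have := lstar_mem (show (0:ℝ) < x by linarith)
    rw [h] at this
    simp at this
    linarith
  | succ n ih =>
    intro x hx h
    have hx5 : 5 < x := by linarith
    rw [sum_rec _ hx5]
    have hrec : lstar (lam x) = n := by
      have := lstar_succ hx5
      omega
    have hxinv : 1/x < 1/21 := by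
      rw [div_lt_div_iff₀ (by linarith) (by norm_num)]
      linarith
    rcases le_or_gt (lam x) 21 with hc | hc
    · have hQ : ∑ k ∈ Finset.range (lstar (lam x)), (lam^[k] (lam x))⁻¹ < 8/5 := by
        rcases le_or_gt (lam x) 5 with hs | hs
        · have : lstar (lam x) = 0 := by
            have h0 : (0:ℕ) ∈ {k : ℕ | lam^[k] (lam x) ≤ 5} := by simpa using hs
            have h00 : lstar (lam x) ≤ 0 := Nat.sInf_le h0
            omega
          simp [this]
        · exact small_bound hs.le hc
      have : (x⁻¹ : ℝ) = 1/x := (one_div x).symm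
      linarith
    · have hIH := ih (lam x) hc hrec
      have h2 : lam x ≤ x/2 := lam_half (by linarith)
      have hlpos : 0 < lam x := lam_pos hx5
      have hkey : 2/x ≤ 1/(lam x) := by
        rw [div_le_div_iff₀ (by linarith) hlpos]
        linarith
      have hkey2 : x⁻¹ + x⁻¹ ≤ (lam x)⁻¹ := by
        simp only [← one_div]
        have he : 1/x + 1/x = 2/x := by ring
        rw [he]
        exact hkey
      simp only [one_div] at hIH hkey ⊢
      linarith

theorem sum_sq_exp_eq_sum_inv (E : ℝ) (hE : 5 ≤ E) :
    (∑ k ∈ Finset.range (lstar E),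
        (lam^[k] E) ^ 2 * Real.exp (-(lam^[k + 1] E)))
      = ∑ k ∈ Finset.range (lstar E), (lam^[k] E)⁻¹ ∧
    (∑ k ∈ Finset.range (lstar E), (lam^[k] E)⁻¹) < 2 := by
  constructor
  · apply Finset.sum_congr rfl
    intro k hk
    have hk' : k < lstar E := Finset.mem_range.mp hk
    set y := lam^[k] E with hy
    have hy5 : 5 < y := lt_of_lt_lstar hk'
    have hypos : 0 < y := by linarith
    have hiter : lam^[k+1] E = lam y := by
      rw [Function.iterate_succ_apply']
    rw [hiter]
    have hexp : Real.exp (-(lam y)) = (y*y*y)⁻¹ := by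
      have : lam y = Real.log y + Real.log y + Real.log y := by unfold lam; ring
      rw [this, Real.exp_neg, Real.exp_add, Real.exp_add, Real.exp_log hypos]
    rw [hexp]
    have hmul : (y*y*y) = y^2 * y := by ring
    rw [hmul, mul_inv, ← mul_assoc, mul_inv_cancel₀ (by positivity), one_mul]
  · rcases le_or_gt E 21 with h | h
    · have := small_bound hE h
      linarith
    · have := large_bound (lstar E) E h rfl
      have hE1 : 0 < 1/E := by positivity
      linarith
end

section
/- In the setting of Lemma corethresholds: define E₀ = E and E_k = λ^{(k)}(E) + ∑_{i=0}^{k-1} 1/E_i for 1 ≤ k ≤ λ*(E), where E ≥ 5. Then λ^{(k)}(E) ≤ E_k < λ^{(k)}(E) + 2 for all 0 ≤ k ≤ λ*(E). -/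
open Real

noncomputable def Eseq (E : ℝ) : ℕ → ℝ
  | 0 => E
  | k + 1 => lam^[k + 1] E +
      ∑ i ∈ (Finset.range (k + 1)).attach,
        1 / Eseq E i.1
  decreasing_by exact Finset.mem_range.mp i.2

lemma exp_ge_of_pow (p q : ℕ) (B : ℝ) (hq : q ≠ 0) (hB : 0 ≤ B)
    (h : B ^ q ≤ (2.7182818283 : ℝ) ^ p) : B ≤ Real.exp ((p : ℝ) / (q : ℝ)) := by
  have h1 : (2.7182818283 : ℝ) ^ p ≤ Real.exp 1 ^ p :=
    pow_le_pow_left₀ (by norm_num) (le_of_lt Real.exp_one_gt_d9) p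
  have h2 : Real.exp 1 ^ p = Real.exp ((p : ℝ)) := by
    rw [← Real.exp_nat_mul]; norm_num
  have h3 : (Real.exp ((p : ℝ) / (q : ℝ))) ^ q = Real.exp ((p : ℝ)) := by
    rw [← Real.exp_nat_mul]
    congr 1
    field_simp
  refine le_of_pow_le_pow_left₀ hq (Real.exp_pos _).le ?_
  rw [h3, ← h2]
  exact le_trans h h1

lemma lam_lt_of_lt {x B c : ℝ} (hx : 0 < x) (hxB : x < B) (hB : B ≤ Real.exp (c / 3)) :
    lam x < c := by
  have hlt : Real.log x < c / 3 := by
    have h := Real.log_lt_log hx (lt_of_lt_of_le hxB hB)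
    rwa [Real.log_exp] at h
  unfold lam; linarith

lemma e1 : (9 : ℝ) ≤ Real.exp (6.6 / 3) := by
  have : (6.6 : ℝ) / 3 = (11 : ℕ) / (5 : ℕ) := by norm_num
  rw [this]
  exact exp_ge_of_pow 11 5 9 (by norm_num) (by norm_num) (by norm_num)

lemma e2 : (6.6 : ℝ) ≤ Real.exp (5.7 / 3) := by
  have : (5.7 : ℝ) / 3 = (19 : ℕ) / (10 : ℕ) := by norm_num
  rw [this]
  exact exp_ge_of_pow 19 10 6.6 (by norm_num) (by norm_num) (by norm_num)

lemma e3 : (5.7 : ℝ) ≤ Real.exp (5.25 / 3) := by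
  have : (5.25 : ℝ) / 3 = (7 : ℕ) / (4 : ℕ) := by norm_num
  rw [this]
  exact exp_ge_of_pow 7 4 5.7 (by norm_num) (by norm_num) (by norm_num)

lemma e4 : (5.25 : ℝ) ≤ Real.exp (5 / 3) := by
  have : (5 : ℝ) / 3 = (5 : ℕ) / (3 : ℕ) := by norm_num
  rw [this]
  exact exp_ge_of_pow 5 3 5.25 (by norm_num) (by norm_num) (by norm_num)

lemma two_mul_le_exp {t : ℝ} (ht : 9 ≤ t) : 2 * t ≤ Real.exp (t / 3) := by
  have h20 : (20 : ℝ) ≤ Real.exp 3 := by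
    have : (3 : ℝ) = (3 : ℕ) / (1 : ℕ) := by norm_num
    rw [this]
    exact exp_ge_of_pow 3 1 20 (by norm_num) (by norm_num) (by norm_num)
  have hsplit : Real.exp (t / 3) = Real.exp 3 * Real.exp ((t - 9) / 3) := by
    rw [← Real.exp_add]; ring_nf
  have h1 : (1 : ℝ) + (t - 9) / 3 ≤ Real.exp ((t - 9) / 3) := by
    have := Real.add_one_le_exp ((t - 9) / 3)
    linarith
  have hpos : (0 : ℝ) ≤ 1 + (t - 9) / 3 := by linarith
  have : 20 * (1 + (t - 9) / 3) ≤ Real.exp 3 * Real.exp ((t - 9) / 3) :=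
    mul_le_mul h20 h1 hpos (Real.exp_pos _).le
  rw [← hsplit] at this
  nlinarith

lemma sum_lt_two (y : ℝ) (n : ℕ) (h5 : ∀ i, i < n → 5 ≤ lam^[i] y) :
    ∑ i ∈ Finset.range n, 1 / lam^[i] y < 2 := by
  have hterm : ∀ i, i < n → 1 / lam^[i] y ≤ 1 / 5 := by
    intro i hi
    exact one_div_le_one_div_of_le (by norm_num) (h5 i hi)
  by_cases hn : n ≤ 4
  · calc ∑ i ∈ Finset.range n, 1 / lam^[i] y
        ≤ (Finset.range n).card • ((1:ℝ)/5) :=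
          Finset.sum_le_card_nsmul _ _ _ (fun i hi => hterm i (Finset.mem_range.mp hi))
      _ = (n : ℝ) * (1/5) := by simp [nsmul_eq_mul]
      _ ≤ 4 * (1/5) := by
          have : (n : ℝ) ≤ 4 := by exact_mod_cast hn
          linarith
      _ < 2 := by norm_num
  · push_neg at hn
    set i0 := n - 4 with hi0
    have h9 : ∀ i, i + 4 < n → 9 ≤ lam^[i] y := by
      intro i hi
      by_contra hcon
      push_neg at hcon
      have p0 := h5 i (by omega)
      have s1 : lam^[i+1] y < 6.6 := by
        rw [Function.iterate_succ_apply']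
        exact lam_lt_of_lt (by linarith) hcon e1
      have p1 := h5 (i+1) (by omega)
      have s2 : lam^[i+2] y < 5.7 := by
        rw [show i+2 = (i+1)+1 from rfl, Function.iterate_succ_apply']
        exact lam_lt_of_lt (by linarith) s1 e2
      have p2 := h5 (i+2) (by omega)
      have s3 : lam^[i+3] y < 5.25 := by
        rw [show i+3 = (i+2)+1 from rfl, Function.iterate_succ_apply']
        exact lam_lt_of_lt (by linarith) s2 e3
      have p3 := h5 (i+3) (by omega)
      have s4 : lam^[i+4] y < 5 := by
        rw [show i+4 = (i+3)+1 from rfl, Function.iterate_succ_apply']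
        exact lam_lt_of_lt (by linarith) s3 e4
      have := h5 (i+4) (by omega)
      linarith
    have hA : ∀ j, j < i0 → 9 * 2 ^ j ≤ lam^[i0 - 1 - j] y := by
      intro j
      induction j with
      | zero =>
          intro _
          have := h9 (i0 - 1) (by omega)
          simpa using this
      | succ j ih =>
          intro hj
          have hk := ih (by omega)
          set i := i0 - 1 - (j + 1) with hidef
          have hip : i + 1 = i0 - 1 - j := by omega
          have h1 : (9 : ℝ) * 2 ^ j ≤ lam^[i+1] y := by rw [hip]; exact hk
          have hx : (0 : ℝ) < lam^[i] y :=
            lt_of_lt_of_le (by norm_num) (h5 i (by omega))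
          have hiter : lam^[i+1] y = 3 * Real.log (lam^[i] y) := by
            rw [Function.iterate_succ_apply']; rfl
          have hxe : lam^[i] y = Real.exp (lam^[i+1] y / 3) := by
            rw [hiter]
            rw [show (3 : ℝ) * Real.log (lam^[i] y) / 3 = Real.log (lam^[i] y) by ring]
            rw [Real.exp_log hx]
          have h9' : (9 : ℝ) ≤ lam^[i+1] y := by
            have h2j : (1 : ℝ) ≤ 2 ^ j := one_le_pow₀ (by norm_num : (1:ℝ) ≤ 2)
            nlinarith
          have h2t := two_mul_le_exp h9'
          rw [← hxe] at h2t
          calc (9 : ℝ) * 2 ^ (j + 1) = 2 * (9 * 2 ^ j) := by ring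
            _ ≤ 2 * lam^[i+1] y := by linarith
            _ ≤ lam^[i] y := h2t
    have hi0n : i0 ≤ n := by omega
    have hsplit : ∑ i ∈ Finset.range n, 1 / lam^[i] y
        = ∑ i ∈ Finset.range i0, 1 / lam^[i] y + ∑ i ∈ Finset.Ico i0 n, 1 / lam^[i] y := by
      simp only [Finset.range_eq_Ico]
      exact (Finset.sum_Ico_consecutive _ (Nat.zero_le i0) hi0n).symm
    have hgeo : ∑ i ∈ Finset.range i0, 1 / lam^[i] y ≤ 2 / 9 := by
      have hb : ∀ i ∈ Finset.range i0, 1 / lam^[i] y ≤ (1/9 : ℝ) * (1/2) ^ (i0 - 1 - i) := by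
        intro i hi
        rw [Finset.mem_range] at hi
        have hAi := hA (i0 - 1 - i) (by omega)
        have hidx : i0 - 1 - (i0 - 1 - i) = i := by omega
        rw [hidx] at hAi
        have hpos : (0 : ℝ) < 9 * 2 ^ (i0 - 1 - i) := by positivity
        calc 1 / lam^[i] y ≤ 1 / (9 * 2 ^ (i0 - 1 - i)) :=
              one_div_le_one_div_of_le hpos hAi
          _ = (1/9 : ℝ) * (1/2) ^ (i0 - 1 - i) := by
              rw [div_pow]
              field_simp
              rw [one_pow]
      calc ∑ i ∈ Finset.range i0, 1 / lam^[i] y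
          ≤ ∑ i ∈ Finset.range i0, (1/9 : ℝ) * (1/2) ^ (i0 - 1 - i) :=
            Finset.sum_le_sum hb
        _ = (1/9 : ℝ) * ∑ i ∈ Finset.range i0, ((1:ℝ)/2) ^ (i0 - 1 - i) := by
            rw [Finset.mul_sum]
        _ = (1/9 : ℝ) * ∑ i ∈ Finset.range i0, ((1:ℝ)/2) ^ i := by
            rw [Finset.sum_range_reflect (fun i => ((1:ℝ)/2) ^ i) i0]
        _ ≤ (1/9 : ℝ) * 2 := by
            have := sum_geometric_two_le i0
            have h19 : (0:ℝ) ≤ 1/9 := by norm_num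
            nlinarith
        _ = 2 / 9 := by norm_num
    have htail : ∑ i ∈ Finset.Ico i0 n, 1 / lam^[i] y ≤ 4 * (1/5 : ℝ) := by
      calc ∑ i ∈ Finset.Ico i0 n, 1 / lam^[i] y
          ≤ (Finset.Ico i0 n).card • ((1:ℝ)/5) :=
            Finset.sum_le_card_nsmul _ _ _
              (fun i hi => hterm i (Finset.mem_Ico.mp hi).2)
        _ = ((n - i0 : ℕ) : ℝ) * (1/5) := by rw [Nat.card_Ico]; simp [nsmul_eq_mul]
        _ = 4 * (1/5 : ℝ) := by
            have : n - i0 = 4 := by omega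
            rw [this]; norm_num
    rw [hsplit]
    linarith

theorem Eseq_bounds (E : ℝ) (hE : 5 ≤ E) :
    ∀ k : ℕ, k ≤ lstar E →
      lam^[k] E ≤ Eseq E k ∧ Eseq E k < lam^[k] E + 2 := by
  have h5 : ∀ i, i < lstar E → 5 ≤ lam^[i] E := by
    intro i hi
    have hnot : i ∉ {k : ℕ | lam^[k] E ≤ 5} := Nat.notMem_of_lt_sInf hi
    simp only [Set.mem_setOf_eq, not_le] at hnot
    linarith
  intro k
  induction k using Nat.strong_induction_on with
  | _ k IH =>
    intro hk
    match k, hk, IH with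
    | 0, hk, IH =>
        simp [Eseq]
    | (j+1), hk, IH =>
        have hsum_eq : Eseq E (j+1)
            = lam^[j+1] E + ∑ i ∈ Finset.range (j+1), 1 / Eseq E i := by
          rw [Eseq]
          congr 1
          exact Finset.sum_attach (Finset.range (j+1)) (fun i => 1 / Eseq E i)
        have hlow : ∀ i, i < j + 1 → 5 ≤ Eseq E i := by
          intro i hi
          have h1 := (IH i (by omega) (by omega)).1
          have h2 := h5 i (by omega)
          linarith
        have hpos : 0 ≤ ∑ i ∈ Finset.range (j+1), 1 / Eseq E i := by
          refine Finset.sum_nonneg fun i hi => ?_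
          have := hlow i (Finset.mem_range.mp hi)
          positivity
        have hub : ∑ i ∈ Finset.range (j+1), 1 / Eseq E i < 2 := by
          have hle : ∀ i ∈ Finset.range (j+1), 1 / Eseq E i ≤ 1 / lam^[i] E := by
            intro i hi
            have him := Finset.mem_range.mp hi
            have h2 := h5 i (by omega)
            have h1 := (IH i (by omega) (by omega)).1
            exact one_div_le_one_div_of_le (by linarith) h1
          calc ∑ i ∈ Finset.range (j+1), 1 / Eseq E i
              ≤ ∑ i ∈ Finset.range (j+1), 1 / lam^[i] E := Finset.sum_le_sum hle
            _ < 2 := sum_lt_two E (j+1) (fun i hi => h5 i (by omega))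
        rw [hsum_eq]
        constructor <;> linarith
end
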